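/- Let S = (S^1,…,S^r) be an r-tuple of m×n binary supports, each of rank at most one (as a binary matrix), and let Γ_S be the set of r-tuples (C^1,…,C^r) of m×n complex matrices with rank(C^i) ≤ 1 and supp(C^i) ⊆ S^i for each i. Then the following are equivalent: (i) every tuple in Γ_S is the unique (up to permutation of indices) decomposition of its sum within Γ_S; (ii) the linear map (C^1,…,C^r) ↦ Σᵢ C^i restricted to Γ_S is injective; (iii) the supports S^1,…,S^r, viewed as subsets of index pairs, are pairwise disjoint. -/

import Mathlib

open Matrix

/-- The set Γ_S of r-tuples of rank-at-most-one matrices with supports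
contained in the given tuple of rank-one supports. -/
def GammaS {m n r : ℕ} (S : Fin r → Set (Fin m × Fin n)) :
    Set (Fin r → Matrix (Fin m) (Fin n) ℂ) :=
  {C | ∀ i, (C i).rank ≤ 1 ∧ ∀ k l, C i k l ≠ 0 → (k, l) ∈ S i}

lemma std_supp {m n : ℕ} (k a : Fin m) (l b : Fin n) (c : ℂ)
    (h : Matrix.single k l c a b ≠ 0) : a = k ∧ b = l := by
  simp only [Matrix.single, of_apply, ne_eq, ite_eq_right_iff, not_forall] at h
  obtain ⟨⟨h1, h2⟩, _⟩ := h
  exact ⟨h1.symm, h2.symm⟩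

lemma rank_std_le_one {m n : ℕ} (k : Fin m) (l : Fin n) (c : ℂ) :
    (Matrix.single k l c).rank ≤ 1 := by
  have h : Matrix.single k l c =
      (Matrix.of fun (a : Fin m) (_ : Fin 1) => if k = a then c else 0) *
      (Matrix.of fun (_ : Fin 1) (b : Fin n) => if l = b then (1 : ℂ) else 0) := by
    ext a b
    simp only [Matrix.single, of_apply, Matrix.mul_apply, Fin.sum_univ_one, mul_ite,
      mul_one, mul_zero, ite_and]
    split_ifs <;> rfl
  rw [h]
  calc _ ≤ _ := Matrix.rank_mul_le_right _ _
  _ ≤ Fintype.card (Fin 1) := Matrix.rank_le_card_height _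
  _ = 1 := by simp

/-- Disjoint supports imply injectivity of summation on Γ_S. -/
lemma disj_inj {m n r : ℕ} (S : Fin r → Set (Fin m × Fin n))
    (hd : Pairwise (fun i j => Disjoint (S i) (S j)))
    (C : Fin r → Matrix (Fin m) (Fin n) ℂ) (hC : C ∈ GammaS S)
    (C' : Fin r → Matrix (Fin m) (Fin n) ℂ) (hC' : C' ∈ GammaS S)
    (hsum : (∑ i, C' i) = (∑ i, C i)) : C' = C := by
  funext i
  ext k l
  by_cases hkl : (k, l) ∈ S i
  · have key : ∀ (D : Fin r → Matrix (Fin m) (Fin n) ℂ), D ∈ GammaS S →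
        (∑ t, D t) k l = D i k l := by
      intro D hD
      rw [Matrix.sum_apply]
      rw [Finset.sum_eq_single i]
      · intro t _ hti
        by_contra h
        exact Set.disjoint_left.mp (hd hti) ((hD t).2 k l h) hkl
      · intro h; exact absurd (Finset.mem_univ i) h
    have h := congrFun (congrFun hsum k) l
    rw [show ((∑ i, C' i) k l) = (∑ t, C' t) k l from rfl] at h
    rw [key C' hC', key C hC] at h
    exact h
  · have h1 : C i k l = 0 := by
      by_contra h; exact hkl ((hC i).2 k l h)
    have h2 : C' i k l = 0 := by
      by_contra h; exact hkl ((hC' i).2 k l h)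
    rw [h1, h2]

theorem stmt12 {m n r : ℕ} (S : Fin r → Set (Fin m × Fin n))
    (hrk : ∀ i, ∃ (R : Set (Fin m)) (Cs : Set (Fin n)), S i = R ×ˢ Cs) :
    ((∀ C ∈ GammaS S, ∀ C' ∈ GammaS S, (∑ i, C' i) = (∑ i, C i) →
        ∃ σ : Equiv.Perm (Fin r), ∀ i, C' i = C (σ i)) ↔
      Pairwise (fun i j => Disjoint (S i) (S j))) ∧
    ((∀ C ∈ GammaS S, ∀ C' ∈ GammaS S, (∑ i, C' i) = (∑ i, C i) → C' = C) ↔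
      Pairwise (fun i j => Disjoint (S i) (S j))) := by
  have perm_to_disj : (∀ C ∈ GammaS S, ∀ C' ∈ GammaS S,
      (∑ i, C' i) = (∑ i, C i) →
      ∃ σ : Equiv.Perm (Fin r), ∀ i, C' i = C (σ i)) →
      Pairwise (fun i j => Disjoint (S i) (S j)) := by
    intro h i j hij
    rw [Set.disjoint_left]
    by_contra hcon
    push_neg at hcon
    obtain ⟨⟨k, l⟩, hki, hkj⟩ := hcon
    set E : Matrix (Fin m) (Fin n) ℂ := Matrix.single k l 1 with hE
    set C : Fin r → Matrix (Fin m) (Fin n) ℂ :=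
      fun t => (if t = i then E else 0) + (if t = j then E else 0) with hCdef
    set C' : Fin r → Matrix (Fin m) (Fin n) ℂ :=
      fun t => if t = i then Matrix.single k l 2 else 0 with hC'def
    have hCmem : C ∈ GammaS S := by
      intro t
      constructor
      · simp only [hCdef]
        rcases eq_or_ne t i with rfl | hti
        · have : t ≠ j := fun h => hij h
          simpa [this] using rank_std_le_one k l (1 : ℂ)
        · rcases eq_or_ne t j with rfl | htj
          · simpa [hti] using rank_std_le_one k l (1 : ℂ)
          · simp [hti, htj, Matrix.rank_zero]
      · intro a b hab
        simp only [hCdef] at hab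
        rcases eq_or_ne t i with rfl | hti
        · have : t ≠ j := fun h => hij h
          simp only [if_pos rfl, if_neg this, add_zero] at hab
          obtain ⟨ha, hb⟩ := std_supp k a l b 1 hab
          rw [ha, hb]; exact hki
        · rcases eq_or_ne t j with rfl | htj
          · simp only [if_neg hti, if_pos rfl, zero_add] at hab
            obtain ⟨ha, hb⟩ := std_supp k a l b 1 hab
            rw [ha, hb]; exact hkj
          · simp [hti, htj] at hab
    have hC'mem : C' ∈ GammaS S := by
      intro t
      constructor
      · simp only [hC'def]
        rcases eq_or_ne t i with rfl | hti
        · simpa using rank_std_le_one k l (2 : ℂ)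
        · simp [hti, Matrix.rank_zero]
      · intro a b hab
        simp only [hC'def] at hab
        rcases eq_or_ne t i with rfl | hti
        · simp only [if_pos rfl] at hab
          obtain ⟨ha, hb⟩ := std_supp k a l b 2 hab
          rw [ha, hb]; exact hki
        · simp [hti] at hab
    have hsum : (∑ t, C' t) = (∑ t, C t) := by
      have h1 : (∑ t, C' t) = Matrix.single k l 2 := by
        simp only [hC'def]
        rw [Finset.sum_ite_eq' Finset.univ i (fun _ => Matrix.single k l (2 : ℂ))]
        simp
      have h2 : (∑ t, C t) = E + E := by
        simp only [hCdef, Finset.sum_add_distrib]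
        rw [Finset.sum_ite_eq' Finset.univ i (fun _ => E),
          Finset.sum_ite_eq' Finset.univ j (fun _ => E)]
        simp
      rw [h1, h2, hE, ← Matrix.single_add]
      norm_num
    obtain ⟨σ, hσ⟩ := h C hCmem C' hC'mem hsum
    have h1 := congrFun (congrFun (hσ i) k) l
    simp only [hC'def, hCdef, if_pos rfl] at h1
    have h2 : Matrix.single k l (2 : ℂ) k l = 2 := by
      simp [Matrix.single]
    have h3 : E k l = 1 := by simp [hE, Matrix.single]
    rw [h2] at h1
    rcases eq_or_ne (σ i) i with hsi | hsi
    · have : σ i ≠ j := by rw [hsi]; exact fun h => hij h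
      rw [if_pos hsi, if_neg this] at h1
      simp only [Matrix.add_apply, Matrix.zero_apply, add_zero, h3] at h1
      norm_num at h1
    · rw [if_neg hsi] at h1
      rcases eq_or_ne (σ i) j with hsj | hsj
      · rw [if_pos hsj] at h1
        simp only [Matrix.add_apply, Matrix.zero_apply, zero_add, h3] at h1
        norm_num at h1
      · rw [if_neg hsj] at h1
        simp at h1
  constructor
  · constructor
    · exact perm_to_disj
    · intro hd C hC C' hC' hsum
      exact ⟨Equiv.refl _, fun i => congrFun (disj_inj S hd C hC C' hC' hsum) i⟩
  · constructor
    · intro h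
      apply perm_to_disj
      intro C hC C' hC' hsum
      exact ⟨Equiv.refl _, fun i => congrFun (h C hC C' hC' hsum) i⟩
    · exact fun hd C hC C' hC' hsum => disj_inj S hd C hC C' hC' hsum
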